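/- Let E be a Hermite–Biehler function with no real zeros. Then the following are equivalent: (i) z ↦ E(iz) is real entire; (ii) the functions z ↦ A(iz)² and z ↦ B(iz)² are even functions, and B has a simple zero at the origin (that is, B(0) = 0 and B'(0) ≠ 0). -/

import Mathlib

open MeasureTheory Filter

noncomputable section

/-- `F*(z) = conj (F (conj z))`. -/
def fstar (F : ℂ → ℂ) : ℂ → ℂ := fun z => (starRingEnd ℂ) (F ((starRingEnd ℂ) z))

/-- The open upper half-plane `U`. -/
def UHP : Set ℂ := {z : ℂ | 0 < z.im}

/-- A Hermite–Biehler function: entire with `|E*(z)| < |E(z)|` on the upper half-plane. -/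
def HermiteBiehler (E : ℂ → ℂ) : Prop :=
  Differentiable ℂ E ∧ ∀ z ∈ UHP, ‖fstar E z‖ < ‖E z‖

/-- `A = (E + E*)/2`. -/
def Afun (E : ℂ → ℂ) : ℂ → ℂ := fun z => (E z + fstar E z) / 2

/-- `B = (i/2)(E − E*)`. -/
def Bfun (E : ℂ → ℂ) : ℂ → ℂ := fun z => Complex.I * (E z - fstar E z) / 2

open Topology Complex in
lemma CL5.fstar_hasDerivAt {E : ℂ → ℂ} (hE : Differentiable ℂ E) (z : ℂ) :
    HasDerivAt (fstar E) ((starRingEnd ℂ) (deriv E ((starRingEnd ℂ) z))) z := by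
  rw [hasDerivAt_iff_tendsto_slope]
  have h1 : Tendsto (fun w => (starRingEnd ℂ) w) (𝓝[≠] z) (𝓝[≠] ((starRingEnd ℂ) z)) := by
    rw [tendsto_nhdsWithin_iff]
    constructor
    · exact ((Complex.continuous_conj.tendsto z).mono_left nhdsWithin_le_nhds)
    · filter_upwards [self_mem_nhdsWithin] with w hw
      simp only [Set.mem_compl_iff, Set.mem_singleton_iff] at hw ⊢
      exact fun h => hw ((starRingEnd ℂ).injective h)
  have h2 : Tendsto (slope E ((starRingEnd ℂ) z)) (𝓝[≠] ((starRingEnd ℂ) z))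
      (𝓝 (deriv E ((starRingEnd ℂ) z))) :=
    hasDerivAt_iff_tendsto_slope.mp (hE _).hasDerivAt
  have h3 := (Complex.continuous_conj.tendsto _).comp (h2.comp h1)
  refine h3.congr fun w => ?_
  simp only [Function.comp_apply, slope_def_field, fstar]
  rw [← map_sub, ← map_sub, map_div₀, Complex.conj_conj]

open Topology in
lemma CL5.entire_mul_eq_zero {f g : ℂ → ℂ} (hf : Differentiable ℂ f) (hg : Differentiable ℂ g)
    (h : ∀ z, f z * g z = 0) : (∀ z, f z = 0) ∨ (∀ z, g z = 0) := by
  by_cases hz : ∀ z, f z = 0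
  · exact Or.inl hz
  push_neg at hz
  obtain ⟨z₀, hz₀⟩ := hz
  right
  have hnear : ∀ᶠ z in 𝓝 z₀, f z ≠ 0 :=
    (hf.continuous.continuousAt).eventually_ne hz₀
  have hgz : ∀ᶠ z in 𝓝 z₀, g z = 0 := by
    filter_upwards [hnear] with z hz
    rcases mul_eq_zero.mp (h z) with h' | h'
    · exact absurd h' hz
    · exact h'
  have hGan : AnalyticOnNhd ℂ g Set.univ := fun z _ => hg.analyticAt z
  have := hGan.eqOn_zero_of_preconnected_of_frequently_eq_zero isPreconnected_univ
    (Set.mem_univ z₀) ((hgz.filter_mono nhdsWithin_le_nhds).frequently)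
  intro z
  exact this (Set.mem_univ z)

lemma CL5.mobius_re_pos {w : ℂ} (hw : ‖w‖ < 1) : 0 < ((1 - w) / (1 + w)).re := by
  have hne : (1 : ℂ) + w ≠ 0 := by
    intro h
    have : w = -1 := by linear_combination h
    rw [this] at hw; simp at hw
  have hkey : ((1 - w) / (1 + w)).re = (1 - Complex.normSq w) / Complex.normSq (1 + w) := by
    rw [Complex.div_re, ← add_div]
    congr 1
    simp [Complex.normSq_apply]
    ring
  rw [hkey]
  apply div_pos
  · have : Complex.normSq w < 1 := by
      rw [← Complex.sq_norm]
      nlinarith [norm_nonneg w]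
    linarith
  · exact Complex.normSq_pos.mpr hne

lemma CL5.exists_theta {k : ℕ} (hk : 2 ≤ k) {c : ℂ} (hc : c ≠ 0) :
    ∃ θ : ℝ, 0 < θ ∧ θ < Real.pi ∧ (Complex.exp (((k : ℝ) * θ : ℝ) * Complex.I) * c).re < 0 := by
  by_contra hcon
  push_neg at hcon
  have hkpos : (0:ℝ) < k := by positivity
  have hk2 : (2:ℝ) ≤ (k:ℝ) := by exact_mod_cast hk
  have hpi := Real.pi_pos
  have key : ∀ t : ℝ, 0 < t → t < Real.pi * k → 0 ≤ Real.cos t * c.re - Real.sin t * c.im := by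
    intro t ht1 ht2
    have := hcon (t / k) (by positivity) (by rw [div_lt_iff₀ hkpos] at *; linarith)
    have harg : (k : ℝ) * (t / k) = t := by field_simp
    rw [harg] at this
    rw [Complex.exp_mul_I] at this
    simpa [Complex.add_re, Complex.mul_re, Complex.cos_ofReal_re, Complex.sin_ofReal_re] using this
  have s2 : Real.sin (Real.pi/4) = Real.sqrt 2 / 2 := Real.sin_pi_div_four
  have c2 : Real.cos (Real.pi/4) = Real.sqrt 2 / 2 := Real.cos_pi_div_four
  have h1 := key (Real.pi/4) (by linarith) (by nlinarith)
  have h2 := key Real.pi (by linarith) (by nlinarith)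
  have h3 := key (7*Real.pi/4) (by linarith) (by nlinarith)
  rw [s2, c2] at h1
  rw [Real.cos_pi, Real.sin_pi] at h2
  have c7 : Real.cos (7*Real.pi/4) = Real.sqrt 2 / 2 := by
    have : (7:ℝ)*Real.pi/4 = 2*Real.pi - Real.pi/4 := by ring
    rw [this, Real.cos_sub, Real.cos_two_pi, Real.sin_two_pi, c2, s2]; ring
  have s7 : Real.sin (7*Real.pi/4) = -(Real.sqrt 2 / 2) := by
    have : (7:ℝ)*Real.pi/4 = 2*Real.pi - Real.pi/4 := by ring
    rw [this, Real.sin_sub, Real.cos_two_pi, Real.sin_two_pi, c2, s2]; ring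
  rw [c7, s7] at h3
  have hs : (0:ℝ) < Real.sqrt 2 := by positivity
  have hre : c.re = 0 := by nlinarith
  have him : c.im = 0 := by nlinarith
  exact hc (Complex.ext hre him)

open Topology in
lemma CL5.hopf_boundary {f : ℂ → ℂ} (hf : AnalyticAt ℂ f 0) (h0 : f 0 = 0)
    {U : Set ℂ} (hU : U ∈ 𝓝 (0:ℂ)) (hpos : ∀ z ∈ U, 0 < z.im → 0 < (f z).re) :
    deriv f 0 ≠ 0 := by
  intro hder
  have hUe : ∀ᶠ z in 𝓝 (0:ℂ), z ∈ U := hU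
  have hnt : analyticOrderAt f 0 ≠ ⊤ := by
    intro ht
    rw [analyticOrderAt_eq_top] at ht
    obtain ⟨δ, hδpos, hδ⟩ := Metric.eventually_nhds_iff.mp (hUe.and ht)
    have hz : dist (Complex.I * ((δ/2 : ℝ) : ℂ)) 0 < δ := by
      have habs : ‖Complex.I * ((δ/2 : ℝ) : ℂ)‖ = δ/2 := by
        rw [norm_mul, Complex.norm_I, one_mul, Complex.norm_real, Real.norm_eq_abs, abs_of_pos (by linarith)]
      rw [Complex.dist_eq, sub_zero, habs]
      linarith
    obtain ⟨hmem, hzero⟩ := hδ hz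
    have him : 0 < (Complex.I * ((δ/2 : ℝ) : ℂ)).im := by simp; linarith
    have := hpos _ hmem him
    rw [hzero] at this
    simp at this
  obtain ⟨k, hk⟩ := WithTop.ne_top_iff_exists.mp hnt
  obtain ⟨g, hg_an, hg0, hfg⟩ := (hf.analyticOrderAt_eq_natCast (n := k)).mp hk.symm
  simp only [sub_zero, smul_eq_mul] at hfg
  have hk0 : k ≠ 0 := by
    intro h
    subst h
    have := hfg.self_of_nhds
    simp [h0] at this
    exact hg0 this.symm
  have hk1 : k ≠ 1 := by
    intro h
    subst h
    have hd1 : HasDerivAt (fun z : ℂ => z ^ 1 * g z) (g 0) 0 := by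
      have := ((hasDerivAt_id (0:ℂ)).mul hg_an.differentiableAt.hasDerivAt)
      simpa [Pi.mul_def] using this
    have : deriv f 0 = g 0 := by
      rw [Filter.EventuallyEq.deriv_eq hfg]
      exact hd1.deriv
    rw [hder] at this
    exact hg0 this.symm
  have hk2 : 2 ≤ k := by omega
  obtain ⟨θ, hθ1, hθ2, hθ3⟩ := CL5.exists_theta hk2 hg0
  set C : ℂ := Complex.exp (((k : ℝ) * θ : ℝ) * Complex.I) with hC
  set e : ℂ := Complex.exp ((θ : ℝ) * Complex.I) with he
  have hek : e ^ k = C := by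
    rw [he, hC, ← Complex.exp_nat_mul]
    congr 1
    push_cast
    ring
  have heim : e.im = Real.sin θ := by
    rw [he]
    simp [Complex.exp_ofReal_mul_I_im]
  have hgc : ContinuousAt g 0 := hg_an.continuousAt
  have htend : Filter.Tendsto (fun z => (C * g z).re) (𝓝 (0:ℂ)) (𝓝 ((C * g 0).re)) :=
    (Complex.continuous_re.continuousAt.comp (continuousAt_const.mul hgc))
  have hev3 : ∀ᶠ z in 𝓝 (0:ℂ), (C * g z).re < 0 := htend.eventually_lt_const hθ3
  have hφ : Filter.Tendsto (fun r : ℝ => (r : ℂ) * e) (𝓝 0) (𝓝 (0:ℂ)) :=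
    (Complex.continuous_ofReal.mul continuous_const).tendsto' (0:ℝ) (0:ℂ) (by simp)
  have hev4 : ∀ᶠ (r : ℝ) in 𝓝 0, ((r:ℂ)*e) ∈ U ∧ f ((r:ℂ)*e) = ((r:ℂ)*e)^k * g ((r:ℂ)*e) ∧
      (C * g ((r:ℂ)*e)).re < 0 := hφ.eventually (hUe.and (hfg.and hev3))
  have hev5 := hev4.filter_mono (nhdsWithin_le_nhds (s := Set.Ioi (0:ℝ)) (a := 0))
  obtain ⟨r, ⟨hmem, hfeq, hneg⟩, hrpos⟩ := (hev5.and self_mem_nhdsWithin).exists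
  have hsin : 0 < Real.sin θ := Real.sin_pos_of_pos_of_lt_pi hθ1 hθ2
  have him : 0 < ((r:ℂ)*e).im := by
    rw [Complex.mul_im]
    simp [heim]
    positivity
  have hfre : (f ((r:ℂ)*e)).re = r^k * (C * g ((r:ℂ)*e)).re := by
    rw [hfeq, mul_pow, hek, ← Complex.ofReal_pow, mul_assoc, Complex.re_ofReal_mul]
  have hp := hpos _ hmem him
  rw [hfre] at hp
  nlinarith [pow_pos hrpos k]

/-- Lemma 5 of Carneiro–Littmann: for a Hermite–Biehler function `E` with no real zeros,
`z ↦ E(iz)` is real entire iff `z ↦ A(iz)²` and `z ↦ B(iz)²` are even and `B` has a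
simple zero at the origin. -/
theorem hermiteBiehler_real_on_imaginary_axis_iff (E : ℂ → ℂ)
    (hHB : HermiteBiehler E) (hnoreal : ∀ x : ℝ, E (x : ℂ) ≠ 0) :
    (∀ x : ℝ, (E (Complex.I * (x : ℂ))).im = 0) ↔
      ((∀ z : ℂ, (Afun E (Complex.I * (-z))) ^ 2 = (Afun E (Complex.I * z)) ^ 2) ∧
       (∀ z : ℂ, (Bfun E (Complex.I * (-z))) ^ 2 = (Bfun E (Complex.I * z)) ^ 2) ∧
       Bfun E 0 = 0 ∧ deriv (Bfun E) 0 ≠ 0) := by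
  obtain ⟨hEd, hEb⟩ := hHB
  have hFd : Differentiable ℂ (fstar E) := fun z => (CL5.fstar_hasDerivAt hEd z).differentiableAt
  have hAd : Differentiable ℂ (Afun E) := (hEd.add hFd).div_const 2
  have hBd : Differentiable ℂ (Bfun E) :=
    ((differentiable_const _).mul (hEd.sub hFd)).div_const 2
  have hE0ne : E 0 ≠ 0 := by simpa using hnoreal 0
  have hfstar0 : fstar E 0 = (starRingEnd ℂ) (E 0) := by simp [fstar]
  -- from B(0)=0 deduce A(0) = E 0
  have hA0_of_B0 : Bfun E 0 = 0 → Afun E 0 = E 0 := by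
    intro hB0
    simp only [Bfun, hfstar0] at hB0
    have hconj : (starRingEnd ℂ) (E 0) = E 0 := by
      have h2 : E 0 - (starRingEnd ℂ) (E 0) = 0 := by
        rw [div_eq_zero_iff] at hB0
        rcases hB0 with h | h
        · rcases mul_eq_zero.mp h with h' | h'
          · exact absurd h' Complex.I_ne_zero
          · exact h'
        · exact absurd h two_ne_zero
      linear_combination -h2
    simp only [Afun, hfstar0, hconj]
    ring
  -- decomposition E = A - i B
  have hEdecomp : ∀ w, E w = Afun E w - Complex.I * Bfun E w := by
    intro w
    simp only [Afun, Bfun]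
    field_simp
    linear_combination (E w - fstar E w) * Complex.I_sq
  -- conjugation symmetry of A and B
  have hAstar : ∀ z, (starRingEnd ℂ) (Afun E ((starRingEnd ℂ) z)) = Afun E z := by
    intro z
    simp only [Afun, fstar, Complex.conj_conj]
    rw [map_div₀, map_add, Complex.conj_conj]
    simp only [map_ofNat]
    ring
  have hBstar : ∀ z, (starRingEnd ℂ) (Bfun E ((starRingEnd ℂ) z)) = Bfun E z := by
    intro z
    simp only [Bfun, fstar, Complex.conj_conj]
    rw [map_div₀, map_mul, map_sub, Complex.conj_conj, Complex.conj_I]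
    simp only [map_ofNat]
    ring
  have hconj_I_mul : ∀ x : ℝ, (starRingEnd ℂ) (-(Complex.I * (x:ℂ))) = Complex.I * (x:ℂ) := by
    intro x
    simp [Complex.conj_ofReal]
  -- the Hopf argument, given A(0) ≠ 0 and B(0) = 0
  have hopf_main : Bfun E 0 = 0 → Afun E 0 ≠ 0 → deriv (Bfun E) 0 ≠ 0 := by
    intro hB0 hA0ne hd
    have hfan : AnalyticAt ℂ (fun z => -Complex.I * Bfun E z / Afun E z) 0 :=
      ((analyticAt_const.mul (hBd.analyticAt 0)).div (hAd.analyticAt 0) hA0ne)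
    have h0 : (fun z => -Complex.I * Bfun E z / Afun E z) 0 = 0 := by simp [hB0]
    have hop : IsOpen {z : ℂ | Afun E z ≠ 0 ∧ E z ≠ 0} := by
      have h1 : IsOpen {z : ℂ | Afun E z ≠ 0} := isOpen_compl_singleton.preimage hAd.continuous
      have h2 : IsOpen {z : ℂ | E z ≠ 0} := isOpen_compl_singleton.preimage hEd.continuous
      exact h1.inter h2
    have hU : {z : ℂ | Afun E z ≠ 0 ∧ E z ≠ 0} ∈ nhds (0:ℂ) := hop.mem_nhds ⟨hA0ne, hE0ne⟩
    have hpos : ∀ z ∈ {z : ℂ | Afun E z ≠ 0 ∧ E z ≠ 0}, 0 < z.im →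
        0 < ((fun z => -Complex.I * Bfun E z / Afun E z) z).re := by
      rintro z ⟨hAne, hEne⟩ him
      have habs : ‖fstar E z / E z‖ < 1 := by
        rw [norm_div]
        rw [div_lt_one (norm_pos_iff.mpr hEne)]
        exact hEb z him
      have hsum : E z + fstar E z ≠ 0 := by
        intro h
        apply hAne
        simp only [Afun, h]
        simp
      have hw1 : (1:ℂ) + fstar E z / E z ≠ 0 := by
        rw [show (1:ℂ) + fstar E z / E z = (E z + fstar E z) / E z by field_simp]
        exact div_ne_zero hsum hEne
      have hfeq : -Complex.I * Bfun E z / Afun E z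
          = (1 - fstar E z / E z) / (1 + fstar E z / E z) := by
        simp only [Bfun, Afun]
        rw [div_eq_div_iff (by simpa [Afun] using hAne) hw1]
        field_simp
        ring_nf
        linear_combination (fstar E z - E z) * Complex.I_sq
      show 0 < (-Complex.I * Bfun E z / Afun E z).re
      rw [hfeq]
      exact CL5.mobius_re_pos habs
    have hnum : HasDerivAt (fun z => -Complex.I * Bfun E z) (-Complex.I * deriv (Bfun E) 0) 0 :=
      ((hBd 0).hasDerivAt).const_mul (-Complex.I)
    have hden : HasDerivAt (Afun E) (deriv (Afun E) 0) 0 := (hAd 0).hasDerivAt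
    have hdiv := hnum.div hden hA0ne
    have hdz : deriv (fun z => -Complex.I * Bfun E z / Afun E z) 0 = 0 := by
      rw [show (fun z => -Complex.I * Bfun E z / Afun E z) = (fun z => -Complex.I * Bfun E z) / Afun E from rfl, hdiv.deriv, hd, hB0]
      ring
    exact CL5.hopf_boundary hfan h0 hU hpos hdz
  constructor
  · -- forward direction
    intro hreal
    -- the relation E(w) = E*(-w)
    have hrel : ∀ w, E w = fstar E (-w) := by
      intro w
      have hGd : Differentiable ℂ (fun z => E z - fstar E (-z)) :=
        hEd.sub (hFd.comp differentiable_neg)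
      have hGzero : ∀ x : ℝ, (fun z => E z - fstar E (-z)) (Complex.I * (x:ℂ)) = 0 := by
        intro x
        simp only [fstar, hconj_I_mul x]
        rw [sub_eq_zero]
        exact ((Complex.conj_eq_iff_im).mpr (hreal x)).symm
      have hGan : AnalyticOnNhd ℂ (fun z => E z - fstar E (-z)) Set.univ :=
        fun z _ => hGd.analyticAt z
      have htend : Filter.Tendsto (fun n : ℕ => Complex.I * ((1/(n+1) : ℝ) : ℂ)) atTop
          (nhdsWithin 0 {(0:ℂ)}ᶜ) := by
        rw [tendsto_nhdsWithin_iff]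
        constructor
        · have h1 : Filter.Tendsto (fun n : ℕ => (1/(n+1) : ℝ)) atTop (nhds 0) :=
            tendsto_one_div_add_atTop_nhds_zero_nat
          have h2 := (Complex.continuous_ofReal.tendsto 0).comp h1
          have h3 := h2.const_mul (Complex.I)
          simpa using h3
        · filter_upwards with n
          simp only [Set.mem_compl_iff, Set.mem_singleton_iff]
          intro h
          rw [mul_eq_zero] at h
          rcases h with h | h
          · exact Complex.I_ne_zero h
          · rw [Complex.ofReal_eq_zero] at h
            have : (0:ℝ) < 1/(n+1) := by positivity
            linarith
      have hfreq : ∃ᶠ z in nhdsWithin 0 {(0:ℂ)}ᶜ, (fun z => E z - fstar E (-z)) z = 0 :=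
        htend.frequently (Filter.Frequently.of_forall (fun n => hGzero (1/(n+1))))
      have := hGan.eqOn_zero_of_preconnected_of_frequently_eq_zero isPreconnected_univ
        (Set.mem_univ 0) hfreq
      have h := this (Set.mem_univ w)
      simpa [sub_eq_zero] using h
    have hAeven : ∀ w, Afun E (-w) = Afun E w := by
      intro w
      simp only [Afun]
      rw [← hrel w, hrel (-w), neg_neg]
      ring
    have hBodd : ∀ w, Bfun E (-w) = -Bfun E w := by
      intro w
      simp only [Bfun]
      rw [← hrel w, hrel (-w), neg_neg]
      ring
    have hB0 : Bfun E 0 = 0 := by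
      have := hBodd 0
      rw [neg_zero] at this
      linear_combination this / 2
    have hA0ne : Afun E 0 ≠ 0 := by
      rw [hA0_of_B0 hB0]
      exact hE0ne
    refine ⟨?_, ?_, hB0, hopf_main hB0 hA0ne⟩
    · intro z
      rw [show Complex.I * (-z) = -(Complex.I * z) by ring, hAeven]
    · intro z
      rw [show Complex.I * (-z) = -(Complex.I * z) by ring, hBodd]
      ring
  · -- backward direction
    rintro ⟨hA2, hB2, hB0, hB'⟩
    have hA0 : Afun E 0 = E 0 := hA0_of_B0 hB0
    have hA0ne : Afun E 0 ≠ 0 := by rw [hA0]; exact hE0ne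
    have e1 : ∀ w : ℂ, Complex.I * -(Complex.I * w) = w := by
      intro w
      rw [mul_neg, ← mul_assoc, Complex.I_mul_I]
      ring
    have e2 : ∀ w : ℂ, Complex.I * (Complex.I * w) = -w := by
      intro w
      rw [← mul_assoc, Complex.I_mul_I]
      ring
    have hA2' : ∀ w : ℂ, Afun E w ^ 2 = Afun E (-w) ^ 2 := by
      intro w
      have := hA2 (Complex.I * w)
      rwa [e1 w, e2 w] at this
    have hB2' : ∀ w : ℂ, Bfun E w ^ 2 = Bfun E (-w) ^ 2 := by
      intro w
      have := hB2 (Complex.I * w)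
      rwa [e1 w, e2 w] at this
    have hAneg : Differentiable ℂ (fun w => Afun E (-w)) := hAd.comp differentiable_neg
    have hBneg : Differentiable ℂ (fun w => Bfun E (-w)) := hBd.comp differentiable_neg
    -- A is even
    have hAeven : ∀ w, Afun E (-w) = Afun E w := by
      have hprod : ∀ w, (Afun E w - Afun E (-w)) * (Afun E w + Afun E (-w)) = 0 := by
        intro w
        linear_combination hA2' w
      rcases CL5.entire_mul_eq_zero (hAd.sub hAneg) (hAd.add hAneg) hprod with hP | hQ
      · intro w
        have : Afun E w - Afun E (-w) = 0 := hP w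
        linear_combination -this
      · exfalso
        apply hA0ne
        have : Afun E 0 + Afun E (-0) = 0 := hQ 0
        rw [neg_zero] at this
        linear_combination this / 2
    -- B is odd
    have hBodd : ∀ w, Bfun E (-w) = -Bfun E w := by
      have hprod : ∀ w, (Bfun E w - Bfun E (-w)) * (Bfun E w + Bfun E (-w)) = 0 := by
        intro w
        linear_combination hB2' w
      rcases CL5.entire_mul_eq_zero (hBd.sub hBneg) (hBd.add hBneg) hprod with hP | hQ
      · exfalso
        apply hB'
        have hfun : (Bfun E ∘ fun x : ℂ => -x) = Bfun E := by
          funext w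
          have : Bfun E w - Bfun E (-w) = 0 := hP w
          have h2 : Bfun E (-w) = Bfun E w := by linear_combination -this
          simpa using h2
        have h1 := HasDerivAt.comp (0:ℂ) ((hBd (-(0:ℂ))).hasDerivAt) (hasDerivAt_neg (0:ℂ))
        rw [neg_zero] at h1
        rw [hfun] at h1
        have h2 := h1.deriv
        linear_combination h2 / 2
      · intro w
        have : Bfun E w + Bfun E (-w) = 0 := hQ w
        linear_combination this
    intro x
    have hconjA : (starRingEnd ℂ) (Afun E (Complex.I * (x:ℂ))) = Afun E (Complex.I * (x:ℂ)) := by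
      have h1 := hAstar (-(Complex.I * (x:ℂ)))
      rw [hconj_I_mul x] at h1
      rw [h1, hAeven]
    have hconjB : (starRingEnd ℂ) (Bfun E (Complex.I * (x:ℂ))) = -Bfun E (Complex.I * (x:ℂ)) := by
      have h1 := hBstar (-(Complex.I * (x:ℂ)))
      rw [hconj_I_mul x] at h1
      rw [h1, hBodd]
    rw [← Complex.conj_eq_iff_im]
    rw [hEdecomp (Complex.I * (x:ℂ))]
    rw [map_sub, map_mul, Complex.conj_I, hconjA, hconjB]
    ring

end
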